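/- Let (U, g) be a Riemannian manifold and let f₁, f₂ be smooth functions on U satisfying the static equation ∇²f_i = f_i·Ric(g) for i = 1, 2. Then the vector field K = f₂∇f₁ − f₁∇f₂ is a Killing field: for all vector fields Y, Z one has ⟨∇_Y K, Z⟩ + ⟨∇_Z K, Y⟩ = 0. In particular, ∇_X K = (Xf₂)∇f₁ − (Xf₁)∇f₂ for every vector field X. -/

import Mathlib

/-!
Lemma 4.4 of Shi–Wang–Yu (key computation): if `f₁`, `f₂` satisfy the static equation
`∇²f_i = f_i · Ric`, then `K = f₂ ∇f₁ - f₁ ∇f₂` is a Killing field.  We work on a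
manifold with trivialized tangent bundle: points form a type `M`, vector fields are
maps `M → V` into a real inner product space `V`; the directional derivative `D`,
the Levi-Civita connection `conn`, the gradient `grad` and the (vector form of the)
Ricci curvature `ricVec` are abstract operators subject to their characteristic
identities. The static equation `∇²fᵢ = fᵢ · Ric` is expressed in the equivalent
vector form `∇_X ∇fᵢ = fᵢ · Ric(X,·)^♯`, where `Ric(X,Y) = ⟪ricVec X, Y⟫`.
-/

/-- **Killing fields from static potentials**: if `∇² f_i = f_i · Ric` for `i = 1, 2`
then `K = f₂ ∇f₁ - f₁ ∇f₂` satisfies `∇_X K = (Xf₂) ∇f₁ - (Xf₁) ∇f₂` for every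
vector field `X`; in particular `⟨∇_Y K, Z⟩ + ⟨∇_Z K, Y⟩ = 0` for all vector fields
`Y, Z`, i.e. `K` is a Killing field. -/
theorem static_gives_killing
    (M : Type) (V : Type) [NormedAddCommGroup V] [InnerProductSpace ℝ V]
    -- the directional derivative: `D X f = X f`
    (D : (M → V) → (M → ℝ) → M → ℝ)
    -- the Levi-Civita connection `∇`
    (conn : (M → V) → (M → V) → M → V)
    -- the gradient
    (grad : (M → ℝ) → M → V)
    -- the vector form of the Ricci curvature: `Ric(X, Y) = ⟪ricVec X, Y⟫`
    (ricVec : (M → V) → M → V)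
    -- the Leibniz rule `∇_X (f Y) = (Xf) Y + f ∇_X Y`
    (leibniz : ∀ (X : M → V) (h : M → ℝ) (Y : M → V) (p : M),
      conn X (fun q => h q • Y q) p = D X h p • Y p + h p • conn X Y p)
    -- additivity of the connection: `∇_X (Y₁ - Y₂) = ∇_X Y₁ - ∇_X Y₂`
    (conn_sub : ∀ (X Y₁ Y₂ : M → V) (p : M),
      conn X (fun q => Y₁ q - Y₂ q) p = conn X Y₁ p - conn X Y₂ p)
    -- the gradient is metric-dual to the differential: `⟨∇f, Z⟩ = Z f`
    (grad_dual : ∀ (h : M → ℝ) (Z : M → V) (p : M),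
      (inner ℝ (grad h p) (Z p) : ℝ) = D Z h p)
    -- the static equations `∇_X ∇fᵢ = fᵢ Ric(X, ·)^♯`
    (f₁ f₂ : M → ℝ)
    (static₁ : ∀ (X : M → V) (p : M), conn X (grad f₁) p = f₁ p • ricVec X p)
    (static₂ : ∀ (X : M → V) (p : M), conn X (grad f₂) p = f₂ p • ricVec X p) :
    (∀ (X : M → V) (p : M),
      conn X (fun q => f₂ q • grad f₁ q - f₁ q • grad f₂ q) p
        = D X f₂ p • grad f₁ p - D X f₁ p • grad f₂ p) ∧
    ∀ (Y Z : M → V) (p : M),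
      (inner ℝ (conn Y (fun q => f₂ q • grad f₁ q - f₁ q • grad f₂ q) p) (Z p) : ℝ)
        + (inner ℝ (conn Z (fun q => f₂ q • grad f₁ q - f₁ q • grad f₂ q) p) (Y p) : ℝ)
        = 0 := by
  have key : ∀ (X : M → V) (p : M),
      conn X (fun q => f₂ q • grad f₁ q - f₁ q • grad f₂ q) p
        = D X f₂ p • grad f₁ p - D X f₁ p • grad f₂ p := by
    intro X p
    rw [conn_sub, leibniz, leibniz, static₁, static₂, smul_smul, smul_smul,
      mul_comm (f₂ p) (f₁ p)]
    abel
  refine ⟨key, fun Y Z p => ?_⟩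
  rw [key, key, inner_sub_left, inner_sub_left, real_inner_smul_left,
    real_inner_smul_left, real_inner_smul_left, real_inner_smul_left,
    grad_dual, grad_dual, grad_dual, grad_dual]
  ring
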